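/- (Dobinski's formula for r-Bell polynomials.) For all integers n ≥ 0 and r ≥ 0 and every real number x, the series Σ_{k=0}^{∞} (k+r)^n x^k / k! converges and equals e^x · B_{n,r}(x), where B_{n,r}(x) := Σ_{k=0}^{n} S_r(n+r, k+r) x^k and S_r(n+r, k+r) denotes the r-Stirling number of the second kind: the number of partitions of the set {1, …, n+r} into exactly k+r nonempty blocks such that the elements 1, 2, …, r lie in r distinct blocks. -/

import Mathlib

open Finset

/-- The `r`-Stirling number of the second kind with parameters `N` and `K`: the number of
partitions of a set with `N` elements (here `{0, …, N−1}`, playing the role of `{1, …, N}`)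
into exactly `K` nonempty blocks such that the first `r` elements lie in `r` distinct blocks
(i.e., every block contains at most one of the first `r` elements). -/
noncomputable def rStirlingSecond (r N K : ℕ) : ℕ :=
  Nat.card {P : Finpartition (Finset.univ : Finset (Fin N)) //
    P.parts.card = K ∧ ∀ t ∈ P.parts, (t.filter (fun x : Fin N => (x : ℕ) < r)).card ≤ 1}

/-- The `r`-Bell polynomial `B_{n,r}(x) = Σ_{k=0}^{n} S_r(n+r, k+r) xᵏ`. -/
noncomputable def rBellPoly (n r : ℕ) (x : ℝ) : ℝ :=
  ∑ k ∈ Finset.range (n + 1), (rStirlingSecond r (n + r) (k + r) : ℝ) * x ^ k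

section Comb

/-- Abbreviation for the separation condition. -/
def SepCond (r : ℕ) {N : ℕ} (P : Finpartition (Finset.univ : Finset (Fin N))) : Prop :=
  ∀ t ∈ P.parts, (t.filter (fun x : Fin N => (x : ℕ) < r)).card ≤ 1

lemma rStirling_def (r N K : ℕ) :
    rStirlingSecond r N K =
      Nat.card {P : Finpartition (Finset.univ : Finset (Fin N)) //
        P.parts.card = K ∧ SepCond r P} := rfl

lemma rStirling_eq_zero_of_lt {r N K : ℕ} (hrN : r ≤ N) (hK : K < r) :
    rStirlingSecond r N K = 0 := by
  rw [rStirling_def, Nat.card_eq_zero]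
  left
  constructor
  rintro ⟨P, hcard, hsep⟩
  -- the map sending i : Fin r to the part containing it is injective
  have hinj : Function.Injective
      (fun i : Fin r => (⟨P.part ⟨i.1, lt_of_lt_of_le i.2 hrN⟩,
        P.part_mem.2 (mem_univ _)⟩ : {t // t ∈ P.parts})) := by
    intro i j hij
    simp only [Subtype.mk_eq_mk] at hij
    by_contra hne
    set a : Fin N := ⟨i.1, lt_of_lt_of_le i.2 hrN⟩
    set b : Fin N := ⟨j.1, lt_of_lt_of_le j.2 hrN⟩
    have hab : a ≠ b := by
      simp only [a, b, Ne, Fin.ext_iff]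
      exact fun h => hne (Fin.ext h)
    have hb : b ∈ P.part a := by
      rw [hij]; exact P.mem_part (mem_univ _)
    have ha : a ∈ P.part a := P.mem_part (mem_univ _)
    have h2 : ({a, b} : Finset (Fin N)) ⊆
        (P.part a).filter (fun x : Fin N => (x : ℕ) < r) := by
      intro x hx
      rcases mem_insert.1 hx with rfl | hx
      · exact mem_filter.2 ⟨ha, i.2⟩
      · rw [mem_singleton.1 hx]; exact mem_filter.2 ⟨hb, j.2⟩
    have := (card_le_card h2).trans (hsep _ (P.part_mem.2 (mem_univ _)))
    rw [card_insert_of_notMem (by simpa using hab), card_singleton] at this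
    omega
  have := Fintype.card_le_of_injective _ hinj
  simp only [Fintype.card_fin, Fintype.card_coe, hcard] at this
  omega

lemma rStirling_eq_zero_of_gt {r N K : ℕ} (hK : N < K) :
    rStirlingSecond r N K = 0 := by
  rw [rStirling_def, Nat.card_eq_zero]
  left
  constructor
  rintro ⟨P, hcard, -⟩
  have := P.card_parts_le_card
  simp only [card_univ, Fintype.card_fin, hcard] at this
  omega

lemma rStirling_diag (r : ℕ) : rStirlingSecond r r r = 1 := by
  rw [rStirling_def]
  have hbot : ((⊥ : Finpartition (Finset.univ : Finset (Fin r))).parts.card = r ∧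
      SepCond r (⊥ : Finpartition (Finset.univ : Finset (Fin r)))) := by
    constructor
    · rw [Finpartition.card_bot, card_univ, Fintype.card_fin]
    · intro t ht
      rw [Finpartition.mem_bot_iff] at ht
      obtain ⟨a, -, rfl⟩ := ht
      exact (card_filter_le _ _).trans (by simp)
  haveI : Unique {P : Finpartition (Finset.univ : Finset (Fin r)) //
      P.parts.card = r ∧ SepCond r P} := by
    refine ⟨⟨⟨⊥, hbot⟩⟩, ?_⟩
    rintro ⟨P, hcard, -⟩
    have hsingle : ∀ t ∈ P.parts, t.card = 1 := by
      -- sum of card over parts = r and there are r nonempty parts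
      by_contra h
      push_neg at h
      obtain ⟨t, ht, ht1⟩ := h
      have h2 : 2 ≤ t.card := by
        have := P.nonempty_of_mem_parts ht
        rw [← card_pos] at this
        omega
      have hsum := P.sum_card_parts
      rw [card_univ, Fintype.card_fin] at hsum
      have hle : ∀ u ∈ P.parts, 1 ≤ u.card := fun u hu => by
        have := P.nonempty_of_mem_parts hu
        rwa [← card_pos] at this
      have h3 : ∑ u ∈ P.parts.erase t, u.card + t.card = ∑ u ∈ P.parts, u.card :=
        Finset.sum_erase_add _ _ ht
      have h4 : (P.parts.erase t).card ≤ ∑ u ∈ P.parts.erase t, u.card := by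
        calc (P.parts.erase t).card = ∑ u ∈ P.parts.erase t, 1 := by
              rw [sum_const, smul_eq_mul, mul_one]
        _ ≤ _ := Finset.sum_le_sum fun u hu => hle _ (mem_of_mem_erase hu)
      have h5 := Finset.card_erase_of_mem ht
      have h6 : 0 < P.parts.card := card_pos.2 ⟨t, ht⟩
      omega
    have : P = ⊥ := by
      ext1
      rw [Finpartition.parts_bot]
      apply Finset.Subset.antisymm
      · intro t ht
        obtain ⟨a, rfl⟩ := Finset.card_eq_one.1 (hsingle t ht)
        exact mem_map.2 ⟨a, mem_univ a, rfl⟩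
      · intro t ht
        obtain ⟨a, -, rfl⟩ := mem_map.1 ht
        obtain ⟨u, hu, hau⟩ := P.exists_mem (mem_univ a)
        obtain ⟨b, rfl⟩ := Finset.card_eq_one.1 (hsingle u hu)
        rw [mem_singleton] at hau
        subst hau
        simpa using hu
    exact Subtype.ext this
  exact Nat.card_unique

namespace RRec

variable {N r K : ℕ}

/-- The distinguished element `r` of `Fin (N+1)`. -/
def E (hrN : r ≤ N) : Fin (N + 1) := ⟨r, Nat.lt_succ_of_le hrN⟩

lemma sA_val (e : Fin (N + 1)) (j : Fin N) :
    ((e.succAbove j : Fin (N + 1)) : ℕ) =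
      if (j : ℕ) < (e : ℕ) then (j : ℕ) else (j : ℕ) + 1 := by
  rw [Fin.succAbove]
  by_cases h : (j : ℕ) < (e : ℕ)
  · rw [if_pos, if_pos h]
    · rfl
    · exact h
  · rw [if_neg, if_neg h]
    · rfl
    · exact h

lemma sA_lt_iff (hrN : r ≤ N) (j : Fin N) :
    (((E hrN).succAbove j : Fin (N + 1)) : ℕ) < r ↔ (j : ℕ) < r := by
  rw [sA_val]
  rw [show ((E hrN : Fin (N + 1)) : ℕ) = r from rfl]
  split_ifs with h <;> omega

lemma sA_val_of_lt (hrN : r ≤ N) (j : Fin N) (h : (j : ℕ) < r) :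
    (((E hrN).succAbove j : Fin (N + 1)) : ℕ) = (j : ℕ) := by
  rw [sA_val]; rw [show ((E hrN : Fin (N + 1)) : ℕ) = r from rfl]; rw [if_pos h]

lemma eq_E_of_val {hrN : r ≤ N} {x : Fin (N + 1)} (h : (x : ℕ) = r) : x = E hrN :=
  Fin.ext h

/-- Pull a subset of `Fin (N+1)` back to `Fin N` along `succAbove`. -/
def down (hrN : r ≤ N) (t : Finset (Fin (N + 1))) : Finset (Fin N) :=
  univ.filter (fun j => (E hrN).succAbove j ∈ t)

lemma mem_down {hrN : r ≤ N} {t : Finset (Fin (N + 1))} {j : Fin N} :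
    j ∈ down hrN t ↔ (E hrN).succAbove j ∈ t := by simp [down]

/-- Push a subset of `Fin N` forward to `Fin (N+1)`, inserting `E` if it contains `i`. -/
def up (hrN : r ≤ N) (i : Fin r) (t : Finset (Fin N)) : Finset (Fin (N + 1)) :=
  if (⟨i.1, lt_of_lt_of_le i.2 hrN⟩ : Fin N) ∈ t
  then insert (E hrN) (t.map (Fin.succAboveEmb (E hrN)))
  else t.map (Fin.succAboveEmb (E hrN))

lemma mem_up {hrN : r ≤ N} {i : Fin r} {t : Finset (Fin N)} {x : Fin (N + 1)} :
    x ∈ up hrN i t ↔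
      (x = E hrN ∧ (⟨i.1, lt_of_lt_of_le i.2 hrN⟩ : Fin N) ∈ t) ∨
        ∃ j ∈ t, (E hrN).succAbove j = x := by
  unfold up
  split_ifs with h
  · simp only [mem_insert, mem_map, Fin.coe_succAboveEmb]
    constructor
    · rintro (rfl | ⟨j, hj, rfl⟩)
      · exact Or.inl ⟨rfl, h⟩
      · exact Or.inr ⟨j, hj, rfl⟩
    · rintro (⟨rfl, -⟩ | ⟨j, hj, rfl⟩)
      · exact Or.inl rfl
      · exact Or.inr ⟨j, hj, rfl⟩
  · simp only [mem_map, Fin.coe_succAboveEmb]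
    constructor
    · rintro ⟨j, hj, rfl⟩
      exact Or.inr ⟨j, hj, rfl⟩
    · rintro (⟨rfl, hi⟩ | ⟨j, hj, rfl⟩)
      · exact absurd hi h
      · exact ⟨j, hj, rfl⟩

lemma E_not_mem_up_of {hrN : r ≤ N} {i : Fin r} {t : Finset (Fin N)}
    (h : (⟨i.1, lt_of_lt_of_le i.2 hrN⟩ : Fin N) ∉ t) : E hrN ∉ up hrN i t := by
  rw [mem_up]
  rintro (⟨-, hi⟩ | ⟨j, -, hj⟩)
  · exact h hi
  · exact Fin.succAbove_ne _ _ hj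

lemma down_up (hrN : r ≤ N) (i : Fin r) (t : Finset (Fin N)) :
    down hrN (up hrN i t) = t := by
  ext j
  rw [mem_down, mem_up]
  constructor
  · rintro (⟨hj, -⟩ | ⟨j', hj', hjj⟩)
    · exact absurd hj (Fin.succAbove_ne _ _)
    · rwa [← Fin.succAbove_right_injective (p := E hrN) hjj]
  · intro hj
    exact Or.inr ⟨j, hj, rfl⟩

/-- The predicate: the part containing `E` contains an element `< r`. -/
def Q (hrN : r ≤ N) (P : Finpartition (Finset.univ : Finset (Fin (N + 1)))) : Prop :=
  ((P.part (E hrN)).filter (fun x : Fin (N + 1) => (x : ℕ) < r)).Nonempty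

/-- Push a partition of `Fin N` up to a partition of `Fin (N+1)`,
putting `E` in the part of `i`. -/
def upPart (hrN : r ≤ N) (i : Fin r)
    (P : Finpartition (Finset.univ : Finset (Fin N))) :
    Finpartition (Finset.univ : Finset (Fin (N + 1))) where
  parts := P.parts.image (up hrN i)
  supIndep := by
    rw [Finset.supIndep_iff_pairwiseDisjoint]
    intro a ha b hb hab
    obtain ⟨t1, ht1, rfl⟩ := mem_image.1 ha
    obtain ⟨t2, ht2, rfl⟩ := mem_image.1 hb
    have ht12 : t1 ≠ t2 := fun h => hab (by rw [h])
    simp only [Function.onFun, id]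
    rw [Finset.disjoint_left]
    intro x hx1 hx2
    rw [mem_up] at hx1 hx2
    rcases hx1 with ⟨rfl, hi1⟩ | ⟨j, hj1, rfl⟩
    · rcases hx2 with ⟨-, hi2⟩ | ⟨j, hj2, hje⟩
      · exact ht12 (P.eq_of_mem_parts ht1 ht2 hi1 hi2)
      · exact Fin.succAbove_ne _ _ hje
    · rcases hx2 with ⟨he, -⟩ | ⟨j', hj2, hje⟩
      · exact Fin.succAbove_ne _ _ he
      · have : j' = j := Fin.succAbove_right_injective (p := E hrN) hje
        subst this
        exact ht12 (P.eq_of_mem_parts ht1 ht2 hj1 hj2)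
  sup_parts := by
    apply Finset.Subset.antisymm (fun x _ => mem_univ x)
    intro x _
    rw [Finset.mem_sup]
    by_cases hx : x = E hrN
    · subst hx
      set i' : Fin N := ⟨i.1, lt_of_lt_of_le i.2 hrN⟩
      refine ⟨up hrN i (P.part i'), mem_image_of_mem _ (P.part_mem.2 (mem_univ _)), ?_⟩
      exact mem_up.2 (Or.inl ⟨rfl, P.mem_part (mem_univ _)⟩)
    · obtain ⟨j, rfl⟩ := Fin.exists_succAbove_eq hx
      refine ⟨up hrN i (P.part j), mem_image_of_mem _ (P.part_mem.2 (mem_univ _)), ?_⟩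
      exact mem_up.2 (Or.inr ⟨j, P.mem_part (mem_univ _), rfl⟩)
  bot_notMem := by
    simp only [bot_eq_empty, mem_image]
    rintro ⟨t, ht, hte⟩
    obtain ⟨j, hj⟩ := P.nonempty_of_mem_parts ht
    have : (E hrN).succAbove j ∈ up hrN i t := mem_up.2 (Or.inr ⟨j, hj, rfl⟩)
    rw [hte] at this
    exact notMem_empty _ this

lemma up_injOn (hrN : r ≤ N) (i : Fin r)
    (P : Finpartition (Finset.univ : Finset (Fin N))) :
    Set.InjOn (up hrN i) P.parts := by
  intro t1 ht1 t2 ht2 h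
  obtain ⟨j, hj⟩ := P.nonempty_of_mem_parts ht1
  have : (E hrN).succAbove j ∈ up hrN i t2 := h ▸ mem_up.2 (Or.inr ⟨j, hj, rfl⟩)
  rw [mem_up] at this
  rcases this with ⟨he, -⟩ | ⟨j', hj2, hje⟩
  · exact absurd he (Fin.succAbove_ne _ _)
  · have : j' = j := Fin.succAbove_right_injective (p := E hrN) hje
    subst this
    exact P.eq_of_mem_parts ht1 ht2 hj hj2

lemma upPart_parts_card (hrN : r ≤ N) (i : Fin r)
    (P : Finpartition (Finset.univ : Finset (Fin N))) :
    (upPart hrN i P).parts.card = P.parts.card := by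
  show (P.parts.image (up hrN i)).card = _
  rw [Finset.card_image_of_injOn (up_injOn hrN i P)]

lemma filter_up (hrN : r ≤ N) (i : Fin r) (t : Finset (Fin N)) :
    (up hrN i t).filter (fun x : Fin (N + 1) => (x : ℕ) < r)
      = ((t.filter (fun j : Fin N => (j : ℕ) < r)).map (Fin.succAboveEmb (E hrN))) := by
  ext x
  simp only [mem_filter, mem_map, Fin.coe_succAboveEmb, mem_up]
  constructor
  · rintro ⟨⟨rfl, -⟩ | ⟨j, hj, rfl⟩, hxr⟩
    · exact absurd hxr (by simp [E])
    · exact ⟨j, ⟨hj, (sA_lt_iff hrN j).1 hxr⟩, rfl⟩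
  · rintro ⟨j, ⟨hj, hjr⟩, rfl⟩
    exact ⟨Or.inr ⟨j, hj, rfl⟩, (sA_lt_iff hrN j).2 hjr⟩

lemma upPart_sep (hrN : r ≤ N) (i : Fin r)
    (P : Finpartition (Finset.univ : Finset (Fin N))) (hs : SepCond r P) :
    SepCond r (upPart hrN i P) := by
  intro t ht
  obtain ⟨t', ht', rfl⟩ := mem_image.1 ht
  rw [filter_up, Finset.card_map]
  exact hs t' ht'

lemma upPart_Q (hrN : r ≤ N) (i : Fin r)
    (P : Finpartition (Finset.univ : Finset (Fin N))) :
    Q hrN (upPart hrN i P) := by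
  set i' : Fin N := ⟨i.1, lt_of_lt_of_le i.2 hrN⟩
  have hmem : i' ∈ P.part i' := P.mem_part (mem_univ _)
  have hup : up hrN i (P.part i') ∈ (upPart hrN i P).parts :=
    mem_image_of_mem _ (P.part_mem.2 (mem_univ _))
  have hE : E hrN ∈ up hrN i (P.part i') := mem_up.2 (Or.inl ⟨rfl, hmem⟩)
  have hpart : (upPart hrN i P).part (E hrN) = up hrN i (P.part i') :=
    Finpartition.part_eq_of_mem _ hup hE
  refine ⟨(E hrN).succAbove i', ?_⟩
  rw [mem_filter, hpart]
  exact ⟨mem_up.2 (Or.inr ⟨i', hmem, rfl⟩), by rw [sA_val_of_lt hrN i' i.2]; exact i.2⟩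

/-- The unique small element in the part of `E`. -/
noncomputable def idx (hrN : r ≤ N)
    (P : Finpartition (Finset.univ : Finset (Fin (N + 1)))) (hQ : Q hrN P) :
    Fin (N + 1) :=
  ((P.part (E hrN)).filter (fun x : Fin (N + 1) => (x : ℕ) < r)).min' hQ

lemma idx_mem (hrN : r ≤ N) (P : Finpartition (Finset.univ : Finset (Fin (N + 1))))
    (hQ : Q hrN P) :
    idx hrN P hQ ∈ P.part (E hrN) ∧ ((idx hrN P hQ : Fin (N + 1)) : ℕ) < r := by
  have := Finset.min'_mem _ hQ
  rw [mem_filter] at this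
  exact this

lemma idx_unique (hrN : r ≤ N) (P : Finpartition (Finset.univ : Finset (Fin (N + 1))))
    (hs : SepCond r P) (hQ : Q hrN P) {x : Fin (N + 1)}
    (hx : x ∈ P.part (E hrN)) (hxr : (x : ℕ) < r) : x = idx hrN P hQ := by
  have hcard := hs _ (P.part_mem.2 (mem_univ (E hrN)))
  exact Finset.card_le_one.1 hcard _ (mem_filter.2 ⟨hx, hxr⟩) _ (Finset.min'_mem _ hQ)

lemma exists_ne_E (hrN : r ≤ N) (P : Finpartition (Finset.univ : Finset (Fin (N + 1))))
    (hQ : Q hrN P) {t : Finset (Fin (N + 1))} (ht : t ∈ P.parts) :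
    ∃ x ∈ t, x ≠ E hrN := by
  by_cases hE : E hrN ∈ t
  · have hteq : t = P.part (E hrN) := (P.part_eq_of_mem ht hE).symm
    refine ⟨idx hrN P hQ, hteq ▸ (idx_mem hrN P hQ).1, ?_⟩
    intro h
    have := (idx_mem hrN P hQ).2
    rw [h] at this
    simp only [E] at this
    omega
  · obtain ⟨x, hx⟩ := P.nonempty_of_mem_parts ht
    exact ⟨x, hx, fun h => hE (h ▸ hx)⟩

lemma down_nonempty (hrN : r ≤ N) (P : Finpartition (Finset.univ : Finset (Fin (N + 1))))
    (hQ : Q hrN P) {t : Finset (Fin (N + 1))} (ht : t ∈ P.parts) :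
    (down hrN t).Nonempty := by
  obtain ⟨x, hx, hxE⟩ := exists_ne_E hrN P hQ ht
  obtain ⟨j, rfl⟩ := Fin.exists_succAbove_eq hxE
  exact ⟨j, mem_down.2 hx⟩

/-- Pull a partition of `Fin (N+1)` down to a partition of `Fin N`. -/
noncomputable def downPart (hrN : r ≤ N)
    (P : Finpartition (Finset.univ : Finset (Fin (N + 1)))) (hQ : Q hrN P) :
    Finpartition (Finset.univ : Finset (Fin N)) where
  parts := P.parts.image (down hrN)
  supIndep := by
    rw [Finset.supIndep_iff_pairwiseDisjoint]
    intro a ha b hb hab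
    obtain ⟨t1, ht1, rfl⟩ := mem_image.1 ha
    obtain ⟨t2, ht2, rfl⟩ := mem_image.1 hb
    have ht12 : t1 ≠ t2 := fun h => hab (by rw [h])
    simp only [Function.onFun, id]
    rw [Finset.disjoint_left]
    intro j hj1 hj2
    exact ht12 (P.eq_of_mem_parts ht1 ht2 (mem_down.1 hj1) (mem_down.1 hj2))
  sup_parts := by
    apply Finset.Subset.antisymm (fun x _ => mem_univ x)
    intro j _
    rw [Finset.mem_sup]
    exact ⟨down hrN (P.part ((E hrN).succAbove j)),
      mem_image_of_mem _ (P.part_mem.2 (mem_univ _)),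
      mem_down.2 (P.mem_part (mem_univ _))⟩
  bot_notMem := by
    simp only [bot_eq_empty, mem_image]
    rintro ⟨t, ht, hte⟩
    obtain ⟨j, hj⟩ := down_nonempty hrN P hQ ht
    rw [hte] at hj
    exact notMem_empty _ hj

lemma down_injOn (hrN : r ≤ N) (P : Finpartition (Finset.univ : Finset (Fin (N + 1))))
    (hQ : Q hrN P) : Set.InjOn (down hrN) P.parts := by
  intro t1 ht1 t2 ht2 h
  obtain ⟨x, hx, hxE⟩ := exists_ne_E hrN P hQ ht1
  obtain ⟨j, rfl⟩ := Fin.exists_succAbove_eq hxE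
  have hj1 : j ∈ down hrN t1 := mem_down.2 hx
  rw [h] at hj1
  exact P.eq_of_mem_parts ht1 ht2 hx (mem_down.1 hj1)

lemma downPart_parts_card (hrN : r ≤ N)
    (P : Finpartition (Finset.univ : Finset (Fin (N + 1)))) (hQ : Q hrN P) :
    (downPart hrN P hQ).parts.card = P.parts.card := by
  show (P.parts.image (down hrN)).card = _
  rw [Finset.card_image_of_injOn (down_injOn hrN P hQ)]

lemma downPart_sep (hrN : r ≤ N)
    (P : Finpartition (Finset.univ : Finset (Fin (N + 1)))) (hQ : Q hrN P)
    (hs : SepCond r P) : SepCond r (downPart hrN P hQ) := by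
  intro t ht
  obtain ⟨t', ht', rfl⟩ := mem_image.1 ht
  refine le_trans (Finset.card_le_card_of_injOn ((E hrN).succAbove) ?_ ?_) (hs t' ht')
  · intro j hj
    rw [Finset.mem_coe, mem_filter] at hj ⊢
    exact ⟨mem_down.1 hj.1, (sA_lt_iff hrN j).2 hj.2⟩
  · intro a _ b _ hab
    exact Fin.succAbove_right_injective (p := E hrN) hab

lemma up_down (hrN : r ≤ N)
    (P : Finpartition (Finset.univ : Finset (Fin (N + 1)))) (hQ : Q hrN P)
    {t : Finset (Fin (N + 1))} (ht : t ∈ P.parts) :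
    up hrN ⟨(idx hrN P hQ : ℕ), (idx_mem hrN P hQ).2⟩ (down hrN t) = t := by
  set i0 := idx hrN P hQ
  have hi0r : (i0 : ℕ) < r := (idx_mem hrN P hQ).2
  set i' : Fin N := ⟨(i0 : ℕ), lt_of_lt_of_le hi0r hrN⟩
  have hsA : (E hrN).succAbove i' = i0 := by
    apply Fin.ext
    rw [sA_val_of_lt hrN i' hi0r]
  ext x
  rw [mem_up]
  constructor
  · rintro (⟨rfl, hi⟩ | ⟨j, hj, rfl⟩)
    · have hidx : i0 ∈ t := by
        have := mem_down.1 hi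
        rwa [hsA] at this
      have : t = P.part (E hrN) :=
        P.eq_of_mem_parts ht (P.part_mem.2 (mem_univ _)) hidx (idx_mem hrN P hQ).1
      rw [this]
      exact P.mem_part (mem_univ _)
    · exact mem_down.1 hj
  · intro hx
    by_cases hxE : x = E hrN
    · subst hxE
      refine Or.inl ⟨rfl, ?_⟩
      show i' ∈ down hrN t
      rw [mem_down, hsA]
      have : t = P.part (E hrN) := (P.part_eq_of_mem ht hx).symm
      rw [this]
      exact (idx_mem hrN P hQ).1
    · obtain ⟨j, rfl⟩ := Fin.exists_succAbove_eq hxE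
      exact Or.inr ⟨j, mem_down.2 hx, rfl⟩

lemma idx_upPart (hrN : r ≤ N) (i : Fin r)
    (P : Finpartition (Finset.univ : Finset (Fin N))) (hs : SepCond r P) :
    idx hrN (upPart hrN i P) (upPart_Q hrN i P)
      = (E hrN).succAbove ⟨i.1, lt_of_lt_of_le i.2 hrN⟩ := by
  set i' : Fin N := ⟨i.1, lt_of_lt_of_le i.2 hrN⟩
  have hmem : i' ∈ P.part i' := P.mem_part (mem_univ _)
  have hup : up hrN i (P.part i') ∈ (upPart hrN i P).parts :=
    mem_image_of_mem _ (P.part_mem.2 (mem_univ _))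
  have hE : E hrN ∈ up hrN i (P.part i') := mem_up.2 (Or.inl ⟨rfl, hmem⟩)
  have hpart : (upPart hrN i P).part (E hrN) = up hrN i (P.part i') :=
    Finpartition.part_eq_of_mem _ hup hE
  symm
  apply idx_unique hrN _ (upPart_sep hrN i P hs) (upPart_Q hrN i P)
  · rw [hpart]
    exact mem_up.2 (Or.inr ⟨i', hmem, rfl⟩)
  · rw [sA_val_of_lt hrN i' i.2]
    exact i.2

/-- The key bijection for the case where the part of `E` meets the first `r` elements. -/
noncomputable def bijA (hrN : r ≤ N) (K : ℕ) :
    {P : Finpartition (Finset.univ : Finset (Fin (N + 1))) //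
        (P.parts.card = K ∧ SepCond r P) ∧ Q hrN P}
      ≃ Fin r × {P' : Finpartition (Finset.univ : Finset (Fin N)) //
        P'.parts.card = K ∧ SepCond r P'} where
  toFun := fun P =>
    (⟨(idx hrN P.1 P.2.2 : ℕ), (idx_mem hrN P.1 P.2.2).2⟩,
     ⟨downPart hrN P.1 P.2.2,
      by rw [downPart_parts_card]; exact P.2.1.1,
      downPart_sep hrN P.1 P.2.2 P.2.1.2⟩)
  invFun := fun z =>
    ⟨upPart hrN z.1 z.2.1,
     ⟨⟨by rw [upPart_parts_card]; exact z.2.2.1, upPart_sep hrN z.1 z.2.1 z.2.2.2⟩,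
      upPart_Q hrN z.1 z.2.1⟩⟩
  left_inv := by
    rintro ⟨P, ⟨hc, hs⟩, hq⟩
    apply Subtype.ext
    show upPart hrN _ (downPart hrN P hq) = P
    ext1
    show ((P.parts.image (down hrN)).image
      (up hrN ⟨(idx hrN P hq : ℕ), (idx_mem hrN P hq).2⟩)) = P.parts
    rw [Finset.image_image]
    have hco : Set.EqOn (up hrN ⟨(idx hrN P hq : ℕ), (idx_mem hrN P hq).2⟩ ∘ down hrN)
        id (↑P.parts) := fun t ht => up_down hrN P hq ht
    rw [Finset.image_congr hco, Finset.image_id]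
  right_inv := by
    rintro ⟨i, ⟨P', hc, hs⟩⟩
    have hidx := idx_upPart hrN i P' hs
    refine Prod.ext ?_ ?_
    · show (⟨(idx hrN (upPart hrN i P') (upPart_Q hrN i P') : ℕ), _⟩ : Fin r) = i
      apply Fin.ext
      show (idx hrN (upPart hrN i P') (upPart_Q hrN i P') : ℕ) = (i : ℕ)
      rw [hidx, sA_val_of_lt hrN _ i.2]
    · apply Subtype.ext
      show downPart hrN (upPart hrN i P') (upPart_Q hrN i P') = P'
      ext1
      show ((P'.parts.image (up hrN i)).image (down hrN)) = P'.parts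
      rw [Finset.image_image]
      have hco : Set.EqOn (down hrN ∘ up hrN i) id (↑P'.parts) :=
        fun t _ => down_up hrN i t
      rw [Finset.image_congr hco, Finset.image_id]

lemma sep_succ_iff (hrN : r ≤ N) (K : ℕ)
    (P : Finpartition (Finset.univ : Finset (Fin (N + 1)))) :
    ((P.parts.card = K ∧ SepCond r P) ∧ ¬Q hrN P)
      ↔ (P.parts.card = K ∧ SepCond (r + 1) P) := by
  have hvalE : ∀ x : Fin (N + 1), (x : ℕ) = r ↔ x = E hrN :=
    fun x => ⟨fun h => Fin.ext h, fun h => by rw [h]; rfl⟩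
  constructor
  · rintro ⟨⟨hc, hs⟩, hnq⟩
    refine ⟨hc, fun t ht => ?_⟩
    by_cases hE : E hrN ∈ t
    · have hteq : t = P.part (E hrN) := (P.part_eq_of_mem ht hE).symm
      have hsub : t.filter (fun x : Fin (N + 1) => (x : ℕ) < r + 1) ⊆ {E hrN} := by
        intro x hx
        rw [mem_filter] at hx
        rcases Nat.lt_succ_iff_lt_or_eq.1 hx.2 with h | h
        · exact absurd ⟨x, mem_filter.2 ⟨hteq ▸ hx.1, h⟩⟩ hnq
        · rw [mem_singleton]; exact (hvalE x).1 h
      exact (card_le_card hsub).trans (card_singleton _).le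
    · have : t.filter (fun x : Fin (N + 1) => (x : ℕ) < r + 1)
          = t.filter (fun x : Fin (N + 1) => (x : ℕ) < r) := by
        apply Finset.filter_congr
        intro x hx
        constructor
        · intro h
          rcases Nat.lt_succ_iff_lt_or_eq.1 h with h | h
          · exact h
          · exact absurd (hvalE x).1 (fun f => hE ((f h) ▸ hx))
        · omega
      rw [this]
      exact hs t ht
  · rintro ⟨hc, hs⟩
    refine ⟨⟨hc, fun t ht => ?_⟩, ?_⟩
    · refine le_trans (card_le_card ?_) (hs t ht)
      intro x hx
      rw [mem_filter] at hx ⊢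
      exact ⟨hx.1, by omega⟩
    · rintro ⟨x, hx⟩
      rw [mem_filter] at hx
      have hpm := P.part_mem.2 (mem_univ (E hrN))
      have h1 : x ∈ (P.part (E hrN)).filter (fun x : Fin (N + 1) => (x : ℕ) < r + 1) :=
        mem_filter.2 ⟨hx.1, by omega⟩
      have h2 : E hrN ∈ (P.part (E hrN)).filter (fun x : Fin (N + 1) => (x : ℕ) < r + 1) :=
        mem_filter.2 ⟨P.mem_part (mem_univ _), by show r < r + 1; omega⟩
      have := Finset.card_le_one.1 (hs _ hpm) _ h1 _ h2
      rw [(hvalE x).2 this] at hx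
      have : (E hrN : ℕ) = r := rfl
      omega

end RRec

lemma rStirling_rec {r N : ℕ} (K : ℕ) (hrN : r ≤ N) :
    rStirlingSecond r (N + 1) K
      = rStirlingSecond (r + 1) (N + 1) K + r * rStirlingSecond r N K := by
  classical
  rw [rStirling_def, rStirling_def, rStirling_def]
  set S := {P : Finpartition (Finset.univ : Finset (Fin (N + 1))) //
    P.parts.card = K ∧ SepCond r P}
  have e1 : S ≃ {x : S // RRec.Q hrN x.1} ⊕ {x : S // ¬RRec.Q hrN x.1} :=
    (Equiv.sumCompl _).symm
  have e2 : {x : S // RRec.Q hrN x.1}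
      ≃ {P : Finpartition (Finset.univ : Finset (Fin (N + 1))) //
          (P.parts.card = K ∧ SepCond r P) ∧ RRec.Q hrN P} :=
    Equiv.subtypeSubtypeEquivSubtypeInter _ _
  have e3 : {x : S // ¬RRec.Q hrN x.1}
      ≃ {P : Finpartition (Finset.univ : Finset (Fin (N + 1))) //
          (P.parts.card = K ∧ SepCond r P) ∧ ¬RRec.Q hrN P} :=
    Equiv.subtypeSubtypeEquivSubtypeInter
      (fun P : Finpartition (Finset.univ : Finset (Fin (N + 1))) =>
        P.parts.card = K ∧ SepCond r P) (fun P => ¬RRec.Q hrN P)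
  have e4 := (e3.trans (Equiv.subtypeEquivRight (RRec.sep_succ_iff hrN K)))
  have e5 := e2.trans (RRec.bijA hrN K)
  rw [Nat.card_congr (e1.trans (Equiv.sumCongr e5 e4))]
  rw [Nat.card_sum, Nat.card_prod, Nat.card_eq_fintype_card (α := Fin r), Fintype.card_fin]
  ring

end Comb

section Analytic

lemma rBell_rec (n r : ℕ) (x : ℝ) :
    rBellPoly (n + 1) r x = x * rBellPoly n (r + 1) x + (r : ℝ) * rBellPoly n r x := by
  unfold rBellPoly
  have h1 : ∀ k ∈ Finset.range (n + 1 + 1),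
      (rStirlingSecond r (n + 1 + r) (k + r) : ℝ) * x ^ k
        = (rStirlingSecond (r + 1) (n + 1 + r) (k + r) : ℝ) * x ^ k
          + (r : ℝ) * ((rStirlingSecond r (n + r) (k + r) : ℝ) * x ^ k) := by
    intro k _
    have h := rStirling_rec (r := r) (N := n + r) (k + r) (Nat.le_add_left r n)
    rw [show n + 1 + r = n + r + 1 from by omega, h]
    push_cast
    ring
  rw [Finset.sum_congr rfl h1, Finset.sum_add_distrib]
  congr 1
  · rw [Finset.sum_range_succ']
    rw [show rStirlingSecond (r + 1) (n + 1 + r) (0 + r) = 0 from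
      rStirling_eq_zero_of_lt (by omega) (by omega)]
    rw [Finset.mul_sum]
    simp only [Nat.cast_zero, zero_mul, add_zero]
    apply Finset.sum_congr rfl
    intro j _
    rw [show j + 1 + r = j + (r + 1) from by omega,
      show n + 1 + r = n + (r + 1) from by omega]
    ring
  · rw [Finset.sum_range_succ]
    rw [show rStirlingSecond r (n + r) (n + 1 + r) = 0 from
      rStirling_eq_zero_of_gt (by omega)]
    rw [Finset.mul_sum]
    simp

theorem dobinski_aux (n : ℕ) : ∀ (r : ℕ) (x : ℝ),
    HasSum (fun k : ℕ => ((k + r : ℕ) : ℝ) ^ n * x ^ k / (k.factorial : ℝ))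
      (Real.exp x * rBellPoly n r x) := by
  induction n with
  | zero =>
    intro r x
    have h := NormedSpace.expSeries_div_hasSum_exp (x : ℝ)
    rw [← Real.exp_eq_exp_ℝ] at h
    have hB : rBellPoly 0 r x = 1 := by
      unfold rBellPoly
      simp [rStirling_diag]
    rw [hB, mul_one]
    simpa using h
  | succ n ih =>
    intro r x
    set g : ℕ → ℝ := fun k => ((k + r : ℕ) : ℝ) ^ n * (k : ℝ) * x ^ k / (k.factorial : ℝ)
      with hg_def
    have h1 : HasSum (fun j : ℕ => x * (((j + (r + 1) : ℕ) : ℝ) ^ n * x ^ j / (j.factorial : ℝ)))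
        (x * (Real.exp x * rBellPoly n (r + 1) x)) := (ih (r + 1) x).mul_left x
    have hshift : (fun j : ℕ => g (j + 1))
        = fun j : ℕ => x * (((j + (r + 1) : ℕ) : ℝ) ^ n * x ^ j / (j.factorial : ℝ)) := by
      funext j
      show ((j + 1 + r : ℕ) : ℝ) ^ n * ((j + 1 : ℕ) : ℝ) * x ^ (j + 1) / ((j + 1).factorial : ℝ)
        = x * (((j + (r + 1) : ℕ) : ℝ) ^ n * x ^ j / (j.factorial : ℝ))
      rw [Nat.factorial_succ, show j + 1 + r = j + (r + 1) from by omega]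
      have hj : (j.factorial : ℝ) ≠ 0 := Nat.cast_ne_zero.2 j.factorial_ne_zero
      have hj1 : ((j + 1 : ℕ) : ℝ) ≠ 0 := Nat.cast_ne_zero.2 (Nat.succ_ne_zero j)
      push_cast
      field_simp
      ring
    have h2 : HasSum (fun j : ℕ => g (j + 1)) (x * (Real.exp x * rBellPoly n (r + 1) x)) := by
      rw [hshift]; exact h1
    have hg : HasSum g (x * (Real.exp x * rBellPoly n (r + 1) x)) := by
      have h3 := (hasSum_nat_add_iff (f := g) 1).1 h2
      simpa [hg_def] using h3
    have h4 : HasSum (fun k : ℕ => (r : ℝ) * (((k + r : ℕ) : ℝ) ^ n * x ^ k / (k.factorial : ℝ)))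
        ((r : ℝ) * (Real.exp x * rBellPoly n r x)) := (ih r x).mul_left _
    have h5 := hg.add h4
    have hfun : (fun k : ℕ => g k
          + (r : ℝ) * (((k + r : ℕ) : ℝ) ^ n * x ^ k / (k.factorial : ℝ)))
        = fun k : ℕ => ((k + r : ℕ) : ℝ) ^ (n + 1) * x ^ k / (k.factorial : ℝ) := by
      funext k
      simp only [hg_def]
      push_cast
      ring
    rw [hfun] at h5
    have hsum : x * (Real.exp x * rBellPoly n (r + 1) x)
        + (r : ℝ) * (Real.exp x * rBellPoly n r x)
        = Real.exp x * rBellPoly (n + 1) r x := by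
      rw [rBell_rec]
      ring
    rwa [hsum] at h5

end Analytic

/-- Dobinski's formula for `r`-Bell polynomials: for all `n, r ≥ 0` and every real `x`, the
series `Σ_{k≥0} (k+r)ⁿ xᵏ / k!` converges to `eˣ · B_{n,r}(x)`. -/
theorem dobinski_r_bell_polynomial (n r : ℕ) (x : ℝ) :
    HasSum (fun k : ℕ => ((k + r : ℕ) : ℝ) ^ n * x ^ k / (k.factorial : ℝ))
      (Real.exp x * rBellPoly n r x) :=
  dobinski_aux n r x
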